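/- There is an exact sequence of right A-modules 0 → P(e) → P(s) → P(e) → S_e → 0, where the map P(e) → P(s) is left multiplication by a, the map P(s) → P(e) is left multiplication by b, and P(e) → S_e is the canonical projection onto the simple top. In particular the simple module S_e has projective dimension 2. -/

import Mathlib

open CategoryTheory MulOpposite Polynomial

namespace Sl2Q

/-- Generators of the path algebra of the quiver `e ⇄ s`:
`0 ↦ 1_e`, `1 ↦ 1_s`, `2 ↦ a : e → s`, `3 ↦ b : s → e`. -/
abbrev FA : Type := FreeAlgebra ℂ (Fin 4)

/-- The defining relations of the path algebra `ℂQ/(ba)`: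
the trivial paths are orthogonal idempotents summing to `1`, the arrows are
compatible with sources and targets, and the path `e → s → e` (first `a`, then `b`,
written `b * a`) is zero. -/
inductive PathRel : FA → FA → Prop
  | idem_e : PathRel (FreeAlgebra.ι ℂ 0 * FreeAlgebra.ι ℂ 0) (FreeAlgebra.ι ℂ 0)
  | idem_s : PathRel (FreeAlgebra.ι ℂ 1 * FreeAlgebra.ι ℂ 1) (FreeAlgebra.ι ℂ 1)
  | orth_es : PathRel (FreeAlgebra.ι ℂ 0 * FreeAlgebra.ι ℂ 1) 0
  | orth_se : PathRel (FreeAlgebra.ι ℂ 1 * FreeAlgebra.ι ℂ 0) 0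
  | sum_one : PathRel (FreeAlgebra.ι ℂ 0 + FreeAlgebra.ι ℂ 1) 1
  | a_tgt : PathRel (FreeAlgebra.ι ℂ 1 * FreeAlgebra.ι ℂ 2) (FreeAlgebra.ι ℂ 2)
  | a_src : PathRel (FreeAlgebra.ι ℂ 2 * FreeAlgebra.ι ℂ 0) (FreeAlgebra.ι ℂ 2)
  | b_tgt : PathRel (FreeAlgebra.ι ℂ 0 * FreeAlgebra.ι ℂ 3) (FreeAlgebra.ι ℂ 3)
  | b_src : PathRel (FreeAlgebra.ι ℂ 3 * FreeAlgebra.ι ℂ 1) (FreeAlgebra.ι ℂ 3)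
  | ba : PathRel (FreeAlgebra.ι ℂ 3 * FreeAlgebra.ι ℂ 2) 0

/-- The path algebra `A = ℂ[e ⇄ s]/(ba)`. -/
def A : Type := RingQuot PathRel

noncomputable instance : Ring A := inferInstanceAs (Ring (RingQuot PathRel))
noncomputable instance : Algebra ℂ A := inferInstanceAs (Algebra ℂ (RingQuot PathRel))

noncomputable def toA : FreeAlgebra ℂ (Fin 4) →ₐ[ℂ] A := RingQuot.mkAlgHom ℂ PathRel

noncomputable def gen (i : Fin 4) : A := toA (FreeAlgebra.ι ℂ i)

/-- the idempotent `1_e` -/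
noncomputable def oneE : A := gen 0
/-- the idempotent `1_s` -/
noncomputable def oneS : A := gen 1
/-- the arrow `a : e → s` -/
noncomputable def arrA : A := gen 2
/-- the arrow `b : s → e` -/
noncomputable def arrB : A := gen 3
/-- the loop `ab` at `s` (first `b`, then `a`) -/
noncomputable def ab : A := arrA * arrB

lemma rel_eq {x y : FA} (h : PathRel x y) : toA x = toA y :=
  RingQuot.mkAlgHom_rel ℂ h

lemma oneS_mul_arrA : oneS * arrA = arrA := by
  rw [oneS, arrA, gen, gen, ← map_mul]
  exact rel_eq PathRel.a_tgt

lemma oneE_mul_arrB : oneE * arrB = arrB := by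
  rw [oneE, arrB, gen, gen, ← map_mul]
  exact rel_eq PathRel.b_tgt

lemma oneS_mul_ab : oneS * ab = ab := by
  rw [ab, ← mul_assoc, oneS_mul_arrA]

/-- `A` is a right module over itself, i.e. a module over `Aᵐᵒᵖ`;
scalars `ℂ` act compatibly. -/
instance : IsScalarTower ℂ Aᵐᵒᵖ A :=
  ⟨fun c r x => by
    rw [MulOpposite.smul_eq_mul_unop, MulOpposite.smul_eq_mul_unop, MulOpposite.unop_smul,
      mul_smul_comm]⟩

instance : SMulCommClass Aᵐᵒᵖ ℂ A :=
  ⟨fun r c x => by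
    rw [MulOpposite.smul_eq_mul_unop, MulOpposite.smul_eq_mul_unop, smul_mul_assoc]⟩

/-- `P u = u·A`, the right ideal generated by `u`, as a right `A`-module
(i.e. a module over `Aᵐᵒᵖ`). -/
noncomputable def P (u : A) : Submodule Aᵐᵒᵖ A := Submodule.span Aᵐᵒᵖ {u}

lemma mem_P {u z : A} (h : u * z = z) : z ∈ P u :=
  Submodule.mem_span_singleton.mpr ⟨op z, by rw [op_smul_eq_mul, h]⟩

instance (p : Submodule Aᵐᵒᵖ A) : SMulCommClass Aᵐᵒᵖ ℂ ↥p :=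
  ⟨fun r c x => Subtype.ext (smul_comm r c (x : A))⟩

instance (p : Submodule Aᵐᵒᵖ A) : IsScalarTower ℂ Aᵐᵒᵖ ↥p :=
  ⟨fun c r x => Subtype.ext (smul_assoc c r (x : A))⟩

/-- Left multiplication by `z` as a homomorphism of right `A`-modules `P u ⟶ P v`,
where `v * z = z` (i.e. `z ∈ v·A`). -/
noncomputable def lmul (u : A) {v z : A} (h : v * z = z) : ↥(P u) →ₗ[Aᵐᵒᵖ] ↥(P v) where
  toFun x := ⟨z * (x : A), mem_P (by rw [← mul_assoc, h])⟩
  map_add' x y := Subtype.ext (by simp [mul_add])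
  map_smul' r x := Subtype.ext (by
    simp [MulOpposite.smul_eq_mul_unop, mul_assoc])

end Sl2Q

namespace Sl2Q

/-- The algebra map `A → ℂ` corresponding to the vertex `e`
(sending `1_e ↦ 1` and `1_s, a, b ↦ 0`). -/
noncomputable def εe : A →ₐ[ℂ] ℂ :=
  RingQuot.liftAlgHom ℂ
    ⟨FreeAlgebra.lift ℂ (fun i => if i = 0 then (1 : ℂ) else 0), by
      rintro x y h
      induction h <;>
        simp [FreeAlgebra.lift_ι_apply]⟩

/-- The one-dimensional simple right `A`-module concentrated at the vertex `e`:
the underlying type is `ℂ`, and `A` acts (on the right) through `εe`,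
so that `1_e` acts as the identity and `1_s`, `a`, `b` act as zero. -/
def Se : Type := ℂ

noncomputable instance : AddCommGroup Se := inferInstanceAs (AddCommGroup ℂ)
noncomputable instance : Module ℂ Se := inferInstanceAs (Module ℂ ℂ)

/-- the (right) action of `A` on `Se` through `εe` -/
noncomputable instance : Module Aᵐᵒᵖ Se :=
  Module.compHom ℂ ((εe.toRingHom).fromOpposite (fun _ _ => mul_comm _ _))

lemma Se.smul_def (r : Aᵐᵒᵖ) (c : Se) : r • c = εe (unop r) • c := rfl

end Sl2Q

namespace Sl2Q

/-- The canonical projection `P(e) ↠ S_e` onto the simple top, induced by `εe`. -/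
noncomputable def πe : ↥(P oneE) →ₗ[Aᵐᵒᵖ] Se where
  toFun x := εe (x : A)
  map_add' x y := by simp [map_add]; rfl
  map_smul' r x := by
    show εe ((x : A) * (unop r)) = εe (unop r) * εe (x : A)
    rw [map_mul, mul_comm]
-- relations as equations in A
lemma e_mul_e : oneE * oneE = oneE := by
  rw [oneE, gen, ← map_mul]; exact rel_eq PathRel.idem_e
lemma s_mul_s : oneS * oneS = oneS := by
  rw [oneS, gen, ← map_mul]; exact rel_eq PathRel.idem_s
lemma e_mul_s : oneE * oneS = 0 := by
  rw [oneE, oneS, gen, gen, ← map_mul]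
  exact (rel_eq PathRel.orth_es).trans (map_zero _)
lemma s_mul_e : oneS * oneE = 0 := by
  rw [oneE, oneS, gen, gen, ← map_mul]
  exact (rel_eq PathRel.orth_se).trans (map_zero _)
lemma e_add_s : oneE + oneS = 1 := by
  rw [oneE, oneS, gen, gen, ← map_add]
  exact (rel_eq PathRel.sum_one).trans (map_one _)
lemma a_mul_e : arrA * oneE = arrA := by
  rw [oneE, arrA, gen, gen, ← map_mul]; exact rel_eq PathRel.a_src
lemma b_mul_s : arrB * oneS = arrB := by
  rw [oneS, arrB, gen, gen, ← map_mul]; exact rel_eq PathRel.b_src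
lemma b_mul_a : arrB * arrA = 0 := by
  rw [arrA, arrB, gen, gen, ← map_mul]
  exact (rel_eq PathRel.ba).trans (map_zero _)

-- derived identities
lemma e_mul_a : oneE * arrA = 0 := by
  rw [← oneS_mul_arrA, ← mul_assoc, e_mul_s, zero_mul]
lemma a_mul_s : arrA * oneS = 0 := by
  nth_rewrite 1 [← a_mul_e]
  rw [mul_assoc, e_mul_s, mul_zero]
lemma s_mul_b : oneS * arrB = 0 := by
  rw [← oneE_mul_arrB, ← mul_assoc, s_mul_e, zero_mul]
lemma b_mul_e : arrB * oneE = 0 := by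
  nth_rewrite 1 [← b_mul_s]
  rw [mul_assoc, s_mul_e, mul_zero]
lemma a_mul_a : arrA * arrA = 0 := by
  nth_rewrite 1 [← a_mul_e]
  rw [mul_assoc, e_mul_a, mul_zero]
lemma b_mul_b : arrB * arrB = 0 := by
  nth_rewrite 1 [← b_mul_s]
  rw [mul_assoc, s_mul_b, mul_zero]
lemma e_mul_ab : oneE * ab = 0 := by rw [ab, ← mul_assoc, e_mul_a, zero_mul]
lemma ab_mul_e : ab * oneE = 0 := by rw [ab, mul_assoc, b_mul_e, mul_zero]
lemma s_mul_ab : oneS * ab = ab := oneS_mul_ab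
lemma ab_mul_s : ab * oneS = ab := by rw [ab, mul_assoc, b_mul_s]
lemma a_mul_ab : arrA * ab = 0 := by rw [ab, ← mul_assoc, a_mul_a, zero_mul]
lemma ab_mul_a : ab * arrA = 0 := by rw [ab, mul_assoc, b_mul_a, mul_zero]
lemma b_mul_ab : arrB * ab = 0 := by rw [ab, ← mul_assoc, b_mul_a, zero_mul]
lemma ab_mul_b : ab * arrB = 0 := by rw [ab, mul_assoc, b_mul_b, mul_zero]
lemma ab_mul_ab : ab * ab = 0 := by rw [ab, mul_assoc, ← mul_assoc arrB, b_mul_a, zero_mul, mul_zero]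

-- matrix model
abbrev M3 : Type := Matrix (Fin 3) (Fin 3) ℂ

noncomputable def mg : Fin 4 → M3 :=
  ![!![0,0,0;0,1,0;0,0,0], !![1,0,0;0,0,0;0,0,1], !![0,0,0;0,0,0;0,1,0], !![0,0,0;1,0,0;0,0,0]]

set_option maxHeartbeats 1000000 in
lemma mg_rels : ∀ ⦃x y : FA⦄, PathRel x y →
    (FreeAlgebra.lift ℂ mg) x = (FreeAlgebra.lift ℂ mg) y := by
  rintro x y h
  induction h <;>
    · simp only [map_mul, map_add, map_zero, map_one, FreeAlgebra.lift_ι_apply, mg,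
        Matrix.cons_val_zero, Matrix.cons_val_one, Matrix.head_cons]
      ext i j
      fin_cases i <;> fin_cases j <;>
        simp [Matrix.mul_apply, Fin.sum_univ_three, Matrix.one_apply, Matrix.vecHead, Matrix.vecTail]

noncomputable def Φ : A →ₐ[ℂ] M3 :=
  RingQuot.liftAlgHom ℂ ⟨FreeAlgebra.lift ℂ mg, mg_rels⟩

lemma Φ_gen (i : Fin 4) : Φ (gen i) = mg i :=
  (RingQuot.liftAlgHom_mkAlgHom_apply _ _ _ _).trans (FreeAlgebra.lift_ι_apply _ _)
-- coefficient extraction via Φ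
lemma Φ_e : Φ oneE = mg 0 := Φ_gen 0
lemma Φ_s : Φ oneS = mg 1 := Φ_gen 1
lemma Φ_a : Φ arrA = mg 2 := Φ_gen 2
lemma Φ_b : Φ arrB = mg 3 := Φ_gen 3
lemma Φ_ab : Φ ab = !![0,0,0;0,0,0;1,0,0] := by
  rw [ab, map_mul, Φ_a, Φ_b, mg]
  ext i j
  fin_cases i <;> fin_cases j <;>
    simp [Matrix.mul_apply, Fin.sum_univ_three, Matrix.vecHead, Matrix.vecTail]

lemma coeff_a_ab {α β : ℂ} (h : α • arrA + β • ab = 0) : α = 0 ∧ β = 0 := by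
  have h2 := congrArg Φ h
  rw [map_add, map_smul, map_smul, map_zero, Φ_a, Φ_ab, mg] at h2
  constructor
  · have := congrArg (fun m : M3 => m 2 1) h2
    simpa [Matrix.vecHead, Matrix.vecTail] using this
  · have := congrArg (fun m : M3 => m 2 0) h2
    simpa [Matrix.vecHead, Matrix.vecTail] using this

lemma coeff_b {α : ℂ} (h : α • arrB = 0) : α = 0 := by
  have h2 := congrArg Φ h
  rw [map_smul, map_zero, Φ_b, mg] at h2
  have := congrArg (fun m : M3 => m 1 0) h2
  simpa [Matrix.vecHead, Matrix.vecTail] using this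

lemma coeff_e_b {α β : ℂ} (h : α • oneE + β • arrB = 0) : α = 0 ∧ β = 0 := by
  have h2 := congrArg Φ h
  rw [map_add, map_smul, map_smul, map_zero, Φ_e, Φ_b, mg] at h2
  constructor
  · have := congrArg (fun m : M3 => m 1 1) h2
    simpa [Matrix.vecHead, Matrix.vecTail] using this
  · have := congrArg (fun m : M3 => m 1 0) h2
    simpa [Matrix.vecHead, Matrix.vecTail] using this

lemma oneE_ne_zero : oneE ≠ 0 := by
  intro h
  have h2 := congrArg Φ h
  rw [map_zero, Φ_e, mg] at h2
  have := congrArg (fun m : M3 => m 1 1) h2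
  simpa [Matrix.vecHead, Matrix.vecTail] using this

lemma a_mul_b : arrA * arrB = ab := rfl

-- spanning
lemma mem_span5 (x : A) :
    x ∈ Submodule.span ℂ ({oneE, oneS, arrA, arrB, ab} : Set A) := by
  set S := Submodule.span ℂ ({oneE, oneS, arrA, arrB, ab} : Set A) with hS
  have hE : oneE ∈ S := Submodule.subset_span (by simp)
  have hSs : oneS ∈ S := Submodule.subset_span (by simp)
  have hA : arrA ∈ S := Submodule.subset_span (by simp)
  have hB : arrB ∈ S := Submodule.subset_span (by simp)
  have hAB : ab ∈ S := Submodule.subset_span (by simp)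
  have h1 : (1 : A) ∈ S := by rw [← e_add_s]; exact add_mem hE hSs
  have hmul : ∀ x ∈ S, ∀ y ∈ S, x * y ∈ S := by
    intro x hx y hy
    refine Submodule.span_induction₂ (p := fun x y _ _ => x * y ∈ S) ?_ ?_ ?_ ?_ ?_ ?_ ?_ hx hy
    · intro x y hx hy
      simp only [Set.mem_insert_iff, Set.mem_singleton_iff] at hx hy
      rcases hx with rfl | rfl | rfl | rfl | rfl <;>
        rcases hy with rfl | rfl | rfl | rfl | rfl <;>
          simp only [e_mul_e, e_mul_s, e_mul_a, oneE_mul_arrB, e_mul_ab,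
              s_mul_e, s_mul_s, oneS_mul_arrA, s_mul_b, oneS_mul_ab,
              a_mul_e, a_mul_s, a_mul_a, a_mul_b, a_mul_ab,
              b_mul_e, b_mul_s, b_mul_a, b_mul_b, b_mul_ab,
              ab_mul_e, ab_mul_s, ab_mul_a, ab_mul_b, ab_mul_ab] <;>
            first
              | exact zero_mem S
              | exact Submodule.subset_span (by simp)
    · intro y _; rw [zero_mul]; exact zero_mem S
    · intro x _; rw [mul_zero]; exact zero_mem S
    · intro x y z _ _ _ h1 h2; rw [add_mul]; exact add_mem h1 h2
    · intro x y z _ _ _ h1 h2; rw [mul_add]; exact add_mem h1 h2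
    · intro r x y _ _ h; rw [smul_mul_assoc]; exact Submodule.smul_mem S r h
    · intro r x y _ _ h; rw [mul_smul_comm]; exact Submodule.smul_mem S r h
  obtain ⟨y, rfl⟩ := RingQuot.mkAlgHom_surjective ℂ PathRel x
  show toA y ∈ S
  induction y using FreeAlgebra.induction with
  | grade0 c =>
      rw [AlgHom.commutes, Algebra.algebraMap_eq_smul_one]
      exact Submodule.smul_mem S c h1
  | grade1 i =>
      fin_cases i
      exacts [hE, hSs, hA, hB]
  | mul y z hy hz => rw [map_mul]; exact hmul _ hy _ hz
  | add y z hy hz => rw [map_add]; exact add_mem hy hz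
-- decompositions of elements of P(e), P(s)
lemma mem_Pe_iff {z : A} : z ∈ P oneE ↔ ∃ α β : ℂ, z = α • oneE + β • arrB := by
  constructor
  · intro hz
    obtain ⟨r, hr⟩ := Submodule.mem_span_singleton.mp hz
    have hz' : z = oneE * unop r := by
      rw [← hr, MulOpposite.smul_eq_mul_unop]
    subst hz'
    refine Submodule.span_induction
      (p := fun w _ => ∃ α β : ℂ, oneE * w = α • oneE + β • arrB)
      ?_ ?_ ?_ ?_ (mem_span5 (unop r))
    · intro x hx
      simp only [Set.mem_insert_iff, Set.mem_singleton_iff] at hx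
      rcases hx with rfl | rfl | rfl | rfl | rfl
      · exact ⟨1, 0, by simp [e_mul_e]⟩
      · exact ⟨0, 0, by simp [e_mul_s]⟩
      · exact ⟨0, 0, by simp [e_mul_a]⟩
      · exact ⟨0, 1, by simp [oneE_mul_arrB]⟩
      · exact ⟨0, 0, by simp [e_mul_ab]⟩
    · exact ⟨0, 0, by simp⟩
    · rintro x y _ _ ⟨α, β, hxy⟩ ⟨α', β', hxy'⟩
      exact ⟨α + α', β + β', by rw [mul_add, hxy, hxy']; module⟩
    · rintro c x _ ⟨α, β, hx⟩
      exact ⟨c * α, c * β, by rw [mul_smul_comm, hx]; module⟩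
  · rintro ⟨α, β, rfl⟩
    exact mem_P (by rw [mul_add, mul_smul_comm, mul_smul_comm, e_mul_e, oneE_mul_arrB])

lemma mem_Ps_iff {z : A} : z ∈ P oneS ↔ ∃ α β γ : ℂ, z = α • oneS + β • arrA + γ • ab := by
  constructor
  · intro hz
    obtain ⟨r, hr⟩ := Submodule.mem_span_singleton.mp hz
    have hz' : z = oneS * unop r := by
      rw [← hr, MulOpposite.smul_eq_mul_unop]
    subst hz'
    refine Submodule.span_induction
      (p := fun w _ => ∃ α β γ : ℂ, oneS * w = α • oneS + β • arrA + γ • ab)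
      ?_ ?_ ?_ ?_ (mem_span5 (unop r))
    · intro x hx
      simp only [Set.mem_insert_iff, Set.mem_singleton_iff] at hx
      rcases hx with rfl | rfl | rfl | rfl | rfl
      · exact ⟨0, 0, 0, by simp [s_mul_e]⟩
      · exact ⟨1, 0, 0, by simp [s_mul_s]⟩
      · exact ⟨0, 1, 0, by simp [oneS_mul_arrA]⟩
      · exact ⟨0, 0, 0, by simp [s_mul_b]⟩
      · exact ⟨0, 0, 1, by simp [oneS_mul_ab]⟩
    · exact ⟨0, 0, 0, by simp⟩
    · rintro x y _ _ ⟨α, β, γ, hxy⟩ ⟨α', β', γ', hxy'⟩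
      exact ⟨α + α', β + β', γ + γ', by rw [mul_add, hxy, hxy']; module⟩
    · rintro c x _ ⟨α, β, γ, hx⟩
      exact ⟨c * α, c * β, c * γ, by rw [mul_smul_comm, hx]; module⟩
  · rintro ⟨α, β, γ, rfl⟩
    refine mem_P ?_
    rw [mul_add, mul_add, mul_smul_comm, mul_smul_comm, mul_smul_comm, s_mul_s,
      oneS_mul_arrA, oneS_mul_ab]

lemma εe_smul (c : ℂ) (x : A) : εe (c • x) = c * εe x := by
  rw [Algebra.smul_def, map_mul, AlgHom.commutes]
  simp

-- values of εe
lemma εe_gen (i : Fin 4) : εe (gen i) = if i = 0 then 1 else 0 :=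
  (RingQuot.liftAlgHom_mkAlgHom_apply _ _ _ _).trans (FreeAlgebra.lift_ι_apply _ _)

lemma εe_e : εe oneE = 1 := εe_gen 0
lemma εe_b : εe arrB = 0 := εe_gen 3
-- abbreviations for the maps
noncomputable abbrev d₂ := lmul oneE oneS_mul_arrA
noncomputable abbrev d₁ := lmul oneS oneE_mul_arrB

lemma lmul_val (u : A) {v z : A} (h : v * z = z) (x : ↥(P u)) :
    ((lmul u h x : ↥(P v)) : A) = z * (x : A) := rfl

lemma d₂_inj : Function.Injective d₂ := by
  rw [← LinearMap.ker_eq_bot, LinearMap.ker_eq_bot']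
  intro x hx
  obtain ⟨α, β, hz⟩ := mem_Pe_iff.mp x.2
  have hval : arrA * (x : A) = 0 := congrArg Subtype.val hx
  rw [hz, mul_add, mul_smul_comm, mul_smul_comm, a_mul_e, a_mul_b] at hval
  obtain ⟨h1, h2⟩ := coeff_a_ab hval
  ext
  rw [hz, h1, h2]
  simp

lemma range_d₂_eq_ker_d₁ : LinearMap.range d₂ = LinearMap.ker d₁ := by
  ext x
  constructor
  · rintro ⟨y, rfl⟩
    refine LinearMap.mem_ker.mpr (Subtype.ext ?_)
    show arrB * (arrA * (y : A)) = 0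
    rw [← mul_assoc, b_mul_a, zero_mul]
  · intro hx
    obtain ⟨α, β, γ, hz⟩ := mem_Ps_iff.mp x.2
    have hval : arrB * (x : A) = 0 := congrArg Subtype.val (LinearMap.mem_ker.mp hx)
    rw [hz, mul_add, mul_add, mul_smul_comm, mul_smul_comm, mul_smul_comm,
      b_mul_s, b_mul_a, b_mul_ab, smul_zero, smul_zero, add_zero, add_zero] at hval
    have hα : α = 0 := coeff_b hval
    refine ⟨⟨β • oneE + γ • arrB, mem_Pe_iff.mpr ⟨β, γ, rfl⟩⟩, Subtype.ext ?_⟩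
    show arrA * (β • oneE + γ • arrB) = (x : A)
    rw [hz, hα, mul_add, mul_smul_comm, mul_smul_comm, a_mul_e, a_mul_b]
    module

lemma πe_d₁ (y : ↥(P oneS)) : πe (d₁ y) = 0 := by
  show εe (arrB * (y : A)) = 0
  rw [map_mul, εe_b, zero_mul]

lemma range_d₁_eq_ker_πe : LinearMap.range d₁ = LinearMap.ker πe := by
  ext x
  constructor
  · rintro ⟨y, rfl⟩
    exact LinearMap.mem_ker.mpr (πe_d₁ y)
  · intro hx
    obtain ⟨α, β, hz⟩ := mem_Pe_iff.mp x.2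
    have hval0 : πe x = 0 := LinearMap.mem_ker.mp hx
    have h2 : πe x = (α : Se) := by
      show εe (x : A) = α
      rw [hz, map_add, εe_smul, εe_smul, εe_e, εe_b, mul_zero, add_zero, mul_one]
    have hval : α = (0 : ℂ) := h2.symm.trans hval0
    refine ⟨⟨β • oneS, mem_Ps_iff.mpr ⟨β, 0, 0, by simp⟩⟩, Subtype.ext ?_⟩
    show arrB * (β • oneS) = (x : A)
    rw [hz, hval, mul_smul_comm, b_mul_s]
    module

lemma πe_surj : Function.Surjective πe := by
  intro c
  refine ⟨⟨(show ℂ from c) • oneE, mem_Pe_iff.mpr ⟨(show ℂ from c), 0, by simp⟩⟩, ?_⟩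
  show εe ((show ℂ from c) • oneE) = c
  rw [εe_smul, εe_e, mul_one]

-- projectivity
noncomputable def selfEquiv : A ≃ₗ[Aᵐᵒᵖ] Aᵐᵒᵖ where
  toFun := op
  invFun := unop
  left_inv x := rfl
  right_inv x := rfl
  map_add' x y := rfl
  map_smul' r x := by
    show op (x * unop r) = r * op x
    rfl

instance : Module.Projective Aᵐᵒᵖ A :=
  Module.Projective.of_equiv selfEquiv.symm

lemma P_absorb {u : A} (h : u * u = u) {z : A} (hz : z ∈ P u) : u * z = z := by
  obtain ⟨r, hr⟩ := Submodule.mem_span_singleton.mp hz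
  rw [← hr, MulOpposite.smul_eq_mul_unop, ← mul_assoc, h]

/-- retraction of the inclusion `P u ⊆ A` for idempotent `u` -/
noncomputable def retr {u : A} (h : u * u = u) : A →ₗ[Aᵐᵒᵖ] ↥(P u) where
  toFun x := ⟨u * x, mem_P (by rw [← mul_assoc, h])⟩
  map_add' x y := Subtype.ext (by simp [mul_add])
  map_smul' r x := Subtype.ext (by
    simp [MulOpposite.smul_eq_mul_unop, mul_assoc])

lemma P_projective {u : A} (h : u * u = u) : Module.Projective Aᵐᵒᵖ ↥(P u) :=
  Module.Projective.of_split (P u).subtype (retr h)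
    (LinearMap.ext fun x => Subtype.ext (P_absorb h x.2))

lemma Pe_projective : Module.Projective Aᵐᵒᵖ ↥(P oneE) := P_projective e_mul_e
lemma Ps_projective : Module.Projective Aᵐᵒᵖ ↥(P oneS) := P_projective s_mul_s
open CategoryTheory in
/-- There is an exact sequence of right `A`-modules
`0 → P(e) → P(s) → P(e) → S_e → 0`, where the first map is left multiplication by
`a`, the second is left multiplication by `b`, and the third is the canonical
projection onto the simple top.  In particular, together with the projectivity of
`P(e)` and `P(s)` and the non-existence of a projective resolution of length `≤ 1`,
the simple module `S_e` has projective dimension `2`. -/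
theorem exact_sequence_Pe_Ps_Pe_Se_and_projdim_two :
    Function.Injective (lmul oneE oneS_mul_arrA) ∧
    LinearMap.range (lmul oneE oneS_mul_arrA) = LinearMap.ker (lmul oneS oneE_mul_arrB) ∧
    LinearMap.range (lmul oneS oneE_mul_arrB) = LinearMap.ker πe ∧
    Function.Surjective πe ∧
    -- `S_e` has projective dimension `2`:
    Module.Projective Aᵐᵒᵖ ↥(P oneE) ∧ Module.Projective Aᵐᵒᵖ ↥(P oneS) ∧
    ¬ ∃ (Q₁ Q₀ : ModuleCat.{0} Aᵐᵒᵖ) (f : Q₁ ⟶ Q₀) (g : Q₀ ⟶ ModuleCat.of Aᵐᵒᵖ Se),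
        Projective Q₁ ∧ Projective Q₀ ∧ Function.Injective f ∧ Function.Surjective g ∧
        LinearMap.range f.hom = LinearMap.ker g.hom := by
  refine ⟨d₂_inj, range_d₂_eq_ker_d₁, range_d₁_eq_ker_πe, πe_surj,
    Pe_projective, Ps_projective, ?_⟩
  rintro ⟨Q₁, Q₀, f, g, hQ₁, hQ₀, hf, hg, hfg⟩
  haveI hp1 : Module.Projective Aᵐᵒᵖ ↥Q₁ :=
    by haveI := hQ₁; exact Q₁.projective_of_module_projective
  haveI hp0 : Module.Projective Aᵐᵒᵖ ↥Q₀ :=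
    by haveI := hQ₀; exact Q₀.projective_of_module_projective
  haveI := Pe_projective
  haveI := Ps_projective
  have hd12 : ∀ x, d₁ (d₂ x) = 0 := fun x =>
    LinearMap.mem_ker.mp (range_d₂_eq_ker_d₁ ▸ LinearMap.mem_range_self d₂ x)
  have hgf : ∀ x, g (f x) = 0 := fun x =>
    LinearMap.mem_ker.mp (hfg ▸ LinearMap.mem_range_self f.hom x)
  -- lift πe along g
  obtain ⟨u, hu⟩ := Module.projective_lifting_property
    g.hom πe hg
  have hu' : ∀ x, g (u x) = πe x := fun x => LinearMap.congr_fun hu x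
  -- lift u ∘ d₁ through f
  have hmem : ∀ x : ↥(P oneS), u (d₁ x) ∈ LinearMap.range f.hom := by
    intro x
    rw [hfg]
    refine LinearMap.mem_ker.mpr ?_
    rw [hu' (d₁ x)]
    exact πe_d₁ x
  set e_f := LinearEquiv.ofInjective f.hom hf with he_f
  set v : ↥(P oneS) →ₗ[Aᵐᵒᵖ] ↥Q₁ :=
    e_f.symm.toLinearMap ∘ₗ
      LinearMap.codRestrict (LinearMap.range f.hom) (u ∘ₗ (d₁ : _ →ₗ[Aᵐᵒᵖ] _)) hmem with hv
  have key : ∀ y : ↥(LinearMap.range f.hom), f (e_f.symm y) = (y : ↥Q₀) := by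
    intro y
    exact LinearEquiv.ofInjective_symm_apply (f := f.hom) (h := hf) y
  have hfv : ∀ x, f (v x) = u (d₁ x) := by
    intro x
    have h3 : v x = e_f.symm
        (LinearMap.codRestrict (LinearMap.range f.hom) (u ∘ₗ (d₁ : _ →ₗ[Aᵐᵒᵖ] _)) hmem x) := rfl
    rw [h3, key]
    simp [LinearMap.codRestrict_apply]
  have hvd2 : ∀ x, v (d₂ x) = 0 := by
    intro x
    apply hf
    rw [hfv (d₂ x), hd12 x, map_zero, map_zero]
  -- lift g along πe
  obtain ⟨w, hw⟩ := Module.projective_lifting_property πe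
    g.hom πe_surj
  have hw' : ∀ x, πe (w x) = g x := fun x => LinearMap.congr_fun hw x
  -- lift w ∘ f through d₁
  have hmem2 : ∀ x : ↥Q₁, w (f x) ∈ LinearMap.range d₁ := by
    intro x
    rw [range_d₁_eq_ker_πe]
    refine LinearMap.mem_ker.mpr ?_
    rw [hw' (f x)]
    exact hgf x
  obtain ⟨t, ht⟩ := Module.projective_lifting_property
    (LinearMap.rangeRestrict (d₁ : _ →ₗ[Aᵐᵒᵖ] _))
    (LinearMap.codRestrict (LinearMap.range d₁) ((w ∘ₗ f.hom)) hmem2)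
    (LinearMap.surjective_rangeRestrict _)
  have ht' : ∀ x, d₁ (t x) = w (f x) := by
    intro x
    have h1 := congrArg Subtype.val (LinearMap.congr_fun ht x)
    simpa [LinearMap.codRestrict_apply] using h1
  -- lift w ∘ u - id through d₁
  set φ : ↥(P oneE) →ₗ[Aᵐᵒᵖ] ↥(P oneE) := w ∘ₗ u - LinearMap.id with hφ
  have hmem3 : ∀ x : ↥(P oneE), φ x ∈ LinearMap.range d₁ := by
    intro x
    rw [range_d₁_eq_ker_πe]
    refine LinearMap.mem_ker.mpr ?_
    simp only [hφ, LinearMap.sub_apply, LinearMap.comp_apply, LinearMap.id_apply, map_sub]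
    rw [hw' (u x), hu' x, sub_self]
  obtain ⟨h₀, hh₀⟩ := Module.projective_lifting_property
    (LinearMap.rangeRestrict (d₁ : _ →ₗ[Aᵐᵒᵖ] _))
    (LinearMap.codRestrict (LinearMap.range d₁) φ hmem3)
    (LinearMap.surjective_rangeRestrict _)
  have hh₀' : ∀ x, d₁ (h₀ x) = w (u x) - x := by
    intro x
    have h1 := congrArg Subtype.val (LinearMap.congr_fun hh₀ x)
    simpa [hφ, LinearMap.codRestrict_apply] using h1
  -- lift t ∘ v - h₀ ∘ d₁ - id through d₂
  set χ : ↥(P oneS) →ₗ[Aᵐᵒᵖ] ↥(P oneS) :=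
    t ∘ₗ v - h₀ ∘ₗ (d₁ : _ →ₗ[Aᵐᵒᵖ] _) - LinearMap.id with hχ
  have hmem4 : ∀ x : ↥(P oneS), χ x ∈ LinearMap.range d₂ := by
    intro x
    rw [range_d₂_eq_ker_d₁]
    refine LinearMap.mem_ker.mpr ?_
    simp only [hχ, LinearMap.sub_apply, LinearMap.comp_apply, LinearMap.id_apply, map_sub]
    rw [ht' (v x), hh₀' (d₁ x), hfv x]
    abel
  obtain ⟨h₁, hh₁⟩ := Module.projective_lifting_property
    (LinearMap.rangeRestrict (d₂ : _ →ₗ[Aᵐᵒᵖ] _))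
    (LinearMap.codRestrict (LinearMap.range d₂) χ hmem4)
    (LinearMap.surjective_rangeRestrict _)
  have hh₁' : ∀ x, d₂ (h₁ x) = χ x := by
    intro x
    have h1 := congrArg Subtype.val (LinearMap.congr_fun hh₁ x)
    simpa [LinearMap.codRestrict_apply] using h1
  -- derive the contradiction
  set x₀ : ↥(P oneE) := ⟨oneE, mem_P e_mul_e⟩ with hx₀
  set σ : ↥(P oneS) := ⟨oneS, mem_P s_mul_s⟩ with hσ
  have h5 : h₁ (d₂ x₀) = -x₀ := by
    apply d₂_inj
    rw [hh₁' (d₂ x₀), map_neg]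
    simp only [hχ, LinearMap.sub_apply, LinearMap.comp_apply, LinearMap.id_apply]
    rw [hvd2 x₀, hd12 x₀, map_zero, map_zero]
    abel
  have hx0 : d₂ x₀ = (op arrA) • σ := by
    apply Subtype.ext
    show arrA * oneE = oneS * arrA
    rw [a_mul_e, oneS_mul_arrA]
  have hval : ((h₁ (d₂ x₀) : A)) = 0 := by
    rw [hx0, map_smul]
    show (h₁ σ : A) * arrA = 0
    obtain ⟨α, β, hdec⟩ := mem_Pe_iff.mp (h₁ σ).2
    rw [hdec, add_mul, smul_mul_assoc, smul_mul_assoc, e_mul_a, b_mul_a, smul_zero,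
      smul_zero, add_zero]
  have h6 : oneE = (0 : A) := by
    have h7 := congrArg Subtype.val h5
    rw [hval] at h7
    have h8 : -(oneE : A) = 0 := h7.symm
    simpa using h8
  exact oneE_ne_zero h6

end Sl2Q
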